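/- Let G be a finite group, k ≥ 1 an integer, and fix signs s_0,…,s_{k−1} ∈ {+,−}. On H = (ℂ^G)^{⊗k} let L_i^h denote the operator acting as L^h_{s_i} on the i-th tensor factor and as the identity elsewhere. Let D_j (j ∈ G×G) be the operators on ℂ^{G×G} defined by D_j |κ⟩ = ∑_{m ∈ G×G} Ω^{κ}_{m j} |m⟩, and let |Ψ⟩ = (1/√|G|) ∑_{h∈G} |(h,1)⟩ ∈ ℂ^{G×G}. On H ⊗ ℂ^{G×G} define M_i = ∑_{h∈G} L_i^h ⊗ D_{(h,1)}. Then (1_H ⊗ ⟨Ψ|) M_0 M_1 ⋯ M_{k−1} (1_H ⊗ |Ψ⟩) = (1/|G|) ∑_{h∈G} L_0^h L_1^h ⋯ L_{k−1}^h, and the same operator is obtained from the reversed adjoint product: (1_H ⊗ ⟨Ψ|) M_{k−1}† ⋯ M_0† (1_H ⊗ |Ψ⟩) = (1/|G|) ∑_{h∈G} L_0^h ⋯ L_{k−1}^h. -/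

import Mathlib

open Matrix Kronecker BigOperators

noncomputable section

variable {G : Type*} [Group G] [Fintype G] [DecidableEq G]

/-- `L^g_+ : |z⟩ ↦ |gz⟩` (left multiplication by `g`). -/
def Lp (g : G) : Matrix G G ℂ := Matrix.of fun x z => if x = g * z then 1 else 0

/-- `L^g_- : |z⟩ ↦ |z g⁻¹⟩` (right multiplication by `g⁻¹`). -/
def Lm (g : G) : Matrix G G ℂ := Matrix.of fun x z => if x = z * g⁻¹ then 1 else 0

/-- `T^g_+ = |g⟩⟨g|`. -/
def Tp (g : G) : Matrix G G ℂ := Matrix.of fun x z => if x = g ∧ z = g then 1 else 0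

/-- `T^g_- = |g⁻¹⟩⟨g⁻¹|`. -/
def Tm (g : G) : Matrix G G ℂ := Tp g⁻¹

/-- Signed `L` operator: `true` stands for `+`, `false` for `−`. -/
def Lsgn (s : Bool) (g : G) : Matrix G G ℂ := if s then Lp g else Lm g

/-- Signed `T` operator: `true` stands for `+`, `false` for `−`. -/
def Tsgn (s : Bool) (g : G) : Matrix G G ℂ := if s then Tp g else Tm g

/-- The operator acting as `A` on the `i`-th tensor factor of `(ℂ^G)^{⊗k}`
and as the identity on all other factors. -/
def factor {k : ℕ} (i : Fin k) (A : Matrix G G ℂ) : Matrix (Fin k → G) (Fin k → G) ℂ :=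
  Matrix.of fun x y => if ∀ j, j ≠ i → x j = y j then A (x i) (y i) else 0

/-- The partial matrix element `(1_H ⊗ ⟨ψ|) Z (1_H ⊗ |ψ⟩)` of an operator `Z` on `H ⊗ ℂ^R`. -/
def pme {H R : Type*} [Fintype R] (ψ : R → ℂ) (Z : Matrix (H × R) (H × R) ℂ) :
    Matrix H H ℂ :=
  Matrix.of fun x y => ∑ a : R, ∑ b : R, (starRingEnd ℂ) (ψ a) * Z (x, a) (y, b) * ψ b

/-- The structure constants `Ω^κ_{mn}` of the quantum double. -/
def Om (k m n : G × G) : ℂ :=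
  if k.2 = m.2 * n.2 ∧ m.1 = k.1 ∧ n.1 = m.2⁻¹ * k.1 * m.2 then 1 else 0

/-- The operator `D_j` on `ℂ^{G×G}` defined by `D_j |κ⟩ = ∑_m Ω^κ_{m j} |m⟩`. -/
def Dop (j : G × G) : Matrix (G × G) (G × G) ℂ := Matrix.of fun m k => Om k m j

set_option linter.unusedSectionVars false

-- auxiliary development
def fconj (a : G × G) : G := a.2⁻¹ * a.1 * a.2

def BD {H : Type*} (Z : Matrix (H × (G × G)) (H × (G × G)) ℂ) (A : G → Matrix H H ℂ) : Prop :=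
  ∀ x a y b, Z (x, a) (y, b) = if a = b then A (fconj a) x y else 0

lemma bd_one {H : Type*} [DecidableEq H] :
    BD (1 : Matrix (H × (G × G)) (H × (G × G)) ℂ) (fun _ => 1) := by
  intro x a y b
  by_cases hab : a = b <;> by_cases hxy : x = y <;>
    simp [Matrix.one_apply, Prod.ext_iff, hab, hxy]

lemma bd_mul {H : Type*} [Fintype H] [DecidableEq H]
    {Z W : Matrix (H × (G × G)) (H × (G × G)) ℂ} {A B : G → Matrix H H ℂ}
    (hZ : BD Z A) (hW : BD W B) : BD (Z * W) (fun h => A h * B h) := by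
  intro x a y b
  replace hZ : ∀ x a y b, Z (x, a) (y, b) = if a = b then A (fconj a) x y else 0 := hZ
  replace hW : ∀ x a y b, W (x, a) (y, b) = if a = b then B (fconj a) x y else 0 := hW
  have key : ∀ z c, Z (x, a) (z, c) * W (z, c) (y, b)
      = if c = a then (if a = b then A (fconj a) x z * B (fconj a) z y else 0) else 0 := by
    intro z c
    rw [hZ, hW]
    by_cases h1 : a = c
    · subst h1
      by_cases h2 : a = b <;> simp [h2]
    · simp [h1, Ne.symm h1]
  rw [Matrix.mul_apply, Fintype.sum_prod_type]
  simp only [key, Finset.sum_ite_eq', Finset.mem_univ, if_true]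
  by_cases hab : a = b <;> simp [hab, Matrix.mul_apply]

lemma bd_conjT {H : Type*} {Z : Matrix (H × (G × G)) (H × (G × G)) ℂ} {A : G → Matrix H H ℂ}
    (h : BD Z A) : BD Zᴴ (fun g => (A g)ᴴ) := by
  intro x a y b
  have := h y b x a
  rw [Matrix.conjTranspose_apply, this]
  by_cases hab : a = b
  · subst hab; simp
  · simp [hab, Ne.symm hab]

lemma bd_prod {H : Type*} [Fintype H] [DecidableEq H] {ι : Type*} (l : List ι)
    (Z : ι → Matrix (H × (G × G)) (H × (G × G)) ℂ) (A : ι → G → Matrix H H ℂ)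
    (h : ∀ i ∈ l, BD (Z i) (A i)) :
    BD ((l.map Z).prod) (fun g => (l.map (fun i => A i g)).prod) := by
  induction l with
  | nil => simpa using bd_one
  | cons i l ih =>
    simp only [List.map_cons, List.prod_cons]
    exact bd_mul (h i List.mem_cons_self) (ih fun j hj => h j (List.mem_cons_of_mem _ hj))

lemma bd_M {k : ℕ} (s : Bool) (i : Fin k) :
    BD (∑ h : G, (factor i (Lsgn s h)) ⊗ₖ Dop (h, 1)) (fun h => factor i (Lsgn s h)) := by
  intro x a y b
  simp only [Matrix.sum_apply, Matrix.kroneckerMap_apply, Dop, Om, Matrix.of_apply]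
  have key : ∀ h : G, factor i (Lsgn s h) x y *
      (if b.2 = a.2 * (h, (1:G)).2 ∧ a.1 = b.1 ∧ (h, (1:G)).1 = a.2⁻¹ * b.1 * a.2 then (1:ℂ) else 0)
      = if h = fconj a then (if a = b then factor i (Lsgn s (fconj a)) x y else 0) else 0 := by
    intro h
    by_cases hab : a = b
    · subst hab
      simp only [mul_one, if_pos rfl, eq_self_iff_true, true_and, fconj]
      by_cases hh : h = a.2⁻¹ * a.1 * a.2
      · subst hh; simp
      · simp [hh]
    · rw [if_neg, mul_zero]
      · simp [hab]
      · rintro ⟨h1, h2, -⟩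
        exact hab (Prod.ext h2 (by simpa using h1.symm))
  rw [Finset.sum_congr rfl (fun h _ => key h)]
  simp [Finset.sum_ite_eq']

lemma pme_bd {H : Type*} {Z : Matrix (H × (G × G)) (H × (G × G)) ℂ} {A : G → Matrix H H ℂ}
    (hZ : BD Z A) (ψ : G × G → ℂ)
    (hψ : ∀ p, ψ p = if p.2 = 1 then (Real.sqrt (Fintype.card G) : ℂ)⁻¹ else 0) :
    pme ψ Z = ((Fintype.card G : ℂ))⁻¹ • ∑ h : G, A h := by
  replace hZ : ∀ x a y b, Z (x, a) (y, b) = if a = b then A (fconj a) x y else 0 := hZ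
  have hc : ((Real.sqrt (Fintype.card G) : ℂ))⁻¹ * ((Real.sqrt (Fintype.card G) : ℂ))⁻¹
      = ((Fintype.card G : ℂ))⁻¹ := by
    rw [← mul_inv, ← Complex.ofReal_mul, Real.mul_self_sqrt (by positivity)]
    simp
  ext x y
  simp only [pme, Matrix.of_apply, Matrix.smul_apply, Matrix.sum_apply, smul_eq_mul]
  have step1 : ∀ a : G × G,
      (∑ b : G × G, (starRingEnd ℂ) (ψ a) * Z (x, a) (y, b) * ψ b)
      = (starRingEnd ℂ) (ψ a) * A (fconj a) x y * ψ a := by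
    intro a
    simp [hZ, mul_ite, ite_mul, mul_zero, zero_mul, Finset.sum_ite_eq]
  rw [Finset.sum_congr rfl (fun a _ => step1 a), Fintype.sum_prod_type]
  have step2 : ∀ a1 : G,
      (∑ a2 : G, (starRingEnd ℂ) (ψ (a1, a2)) * A (fconj (a1, a2)) x y * ψ (a1, a2))
      = ((Fintype.card G : ℂ))⁻¹ * A a1 x y := by
    intro a1
    have : ∀ a2 : G, (starRingEnd ℂ) (ψ (a1, a2)) * A (fconj (a1, a2)) x y * ψ (a1, a2)
        = if a2 = 1 then ((Fintype.card G : ℂ))⁻¹ * A a1 x y else 0 := by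
      intro a2
      by_cases h2 : a2 = 1
      · subst h2
        rw [if_pos rfl]
        have hψ1 : ψ (a1, 1) = ((Real.sqrt (Fintype.card G) : ℝ) : ℂ)⁻¹ := by simp [hψ]
        have hf : fconj ((a1, 1) : G × G) = a1 := by simp [fconj]
        rw [hψ1, hf, map_inv₀, Complex.conj_ofReal, mul_right_comm, hc]
      · simp [hψ, h2]
    simp [this]
  rw [Finset.sum_congr rfl (fun a1 _ => step2 a1), ← Finset.mul_sum]

lemma Lsgn_conjT (s : Bool) (g : G) : (Lsgn s g)ᴴ = Lsgn s g⁻¹ := by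
  cases s
  · ext x z
    simp only [Lsgn, Bool.false_eq_true, if_false, Lm, Matrix.conjTranspose_apply,
      Matrix.of_apply, inv_inv]
    have : (z = x * g⁻¹) ↔ (x = z * g) := by constructor <;> rintro rfl <;> group
    simp only [this]
    split_ifs <;> simp
  · ext x z
    simp only [Lsgn, if_true, Lp, Matrix.conjTranspose_apply, Matrix.of_apply]
    have : (z = g * x) ↔ (x = g⁻¹ * z) := by constructor <;> rintro rfl <;> group
    simp only [this]
    split_ifs <;> simp

lemma factor_conjT {k : ℕ} (i : Fin k) (A : Matrix G G ℂ) : (factor i A)ᴴ = factor i Aᴴ := by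
  ext x y
  simp only [factor, Matrix.conjTranspose_apply, Matrix.of_apply]
  have : (∀ j, j ≠ i → y j = x j) ↔ (∀ j, j ≠ i → x j = y j) :=
    ⟨fun h j hj => (h j hj).symm, fun h j hj => (h j hj).symm⟩
  simp only [this]
  split_ifs <;> simp

lemma factor_list_prod {k : ℕ} (A : Fin k → Matrix G G ℂ) (l : List (Fin k)) (hl : l.Nodup) :
    ((l.map (fun i => factor i (A i))).prod : Matrix (Fin k → G) (Fin k → G) ℂ)
      = Matrix.of fun x y => if ∀ j, j ∉ l → x j = y j
          then (l.map (fun i => A i (x i) (y i))).prod else 0 := by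
  induction l with
  | nil =>
    ext x y
    simp [Matrix.one_apply, funext_iff]
  | cons i l ih =>
    have hi : i ∉ l := (List.nodup_cons.mp hl).1
    have hl' : l.Nodup := (List.nodup_cons.mp hl).2
    ext x y
    simp only [List.map_cons, List.prod_cons]
    rw [ih hl', Matrix.mul_apply]
    simp only [factor, Matrix.of_apply]
    rw [Finset.sum_eq_single (Function.update x i (y i))]
    · have e1 : ∀ j, j ≠ i → x j = Function.update x i (y i) j := fun j hj =>
        (Function.update_of_ne hj _ _).symm
      have hprod : (l.map fun m => A m (Function.update x i (y i) m) (y m)).prod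
          = (l.map fun m => A m (x m) (y m)).prod := by
        congr 1
        exact List.map_congr_left fun m hm => by
          rw [Function.update_of_ne (fun h => hi (by rw [← h]; exact hm)) _ _]
      have hcond : (∀ j, j ∉ l → Function.update x i (y i) j = y j)
          ↔ (∀ j, j ∉ i :: l → x j = y j) := by
        constructor
        · intro h j hj
          have hji : j ≠ i := fun h' => hj (h' ▸ (List.mem_cons_self : i ∈ i :: l))
          have := h j (fun h' => hj (List.mem_cons_of_mem _ h'))
          rwa [Function.update_of_ne hji] at this
        · intro h j hj
          by_cases hji : j = i
          · subst hji; rw [Function.update_self]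
          · rw [Function.update_of_ne hji]
            exact h j (by simp [hji, hj])
      rw [if_pos e1, Function.update_self, mul_ite, mul_zero, hprod]
      simp only [hcond]
    · intro z _ hz
      by_cases h1 : ∀ j, j ≠ i → x j = z j
      · by_cases h2 : ∀ j, j ∉ l → z j = y j
        · exfalso
          apply hz
          funext j
          by_cases hji : j = i
          · subst hji; rw [Function.update_self]; exact h2 j hi
          · rw [Function.update_of_ne hji]; exact (h1 j hji).symm
        · exact mul_eq_zero_of_right _ (if_neg h2)
      · exact mul_eq_zero_of_left (if_neg h1) _
    · intro h; exact absurd (Finset.mem_univ _) h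

/-- With `Mᵢ = ∑_h Lᵢ^h ⊗ D_{(h,1)}` and `|Ψ⟩ = |G|^{-1/2} ∑_h |(h,1)⟩`,
the partial matrix element of the ordered product `M₀ ⋯ M_{k-1}` (and of the reversed product
of adjoints) equals `(1/|G|) ∑_h L₀^h ⋯ L_{k-1}^h`. -/
theorem statement10 (k : ℕ) (hk : 1 ≤ k) (s : Fin k → Bool)
    (M : Fin k → Matrix ((Fin k → G) × (G × G)) ((Fin k → G) × (G × G)) ℂ)
    (hM : ∀ i, M i = ∑ h : G, (factor i (Lsgn (s i) h)) ⊗ₖ Dop (h, 1))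
    (ψ : G × G → ℂ)
    (hψ : ∀ p, ψ p = if p.2 = 1 then (Real.sqrt (Fintype.card G) : ℂ)⁻¹ else 0) :
    pme ψ (((List.finRange k).map M).prod) =
      ((Fintype.card G : ℂ))⁻¹ •
        ∑ h : G, ((List.finRange k).map (fun i => factor i (Lsgn (s i) h))).prod ∧
    pme ψ ((((List.finRange k).reverse).map (fun i => (M i)ᴴ)).prod) =
      ((Fintype.card G : ℂ))⁻¹ •
        ∑ h : G, ((List.finRange k).map (fun i => factor i (Lsgn (s i) h))).prod := by
  have hbd : BD (((List.finRange k).map M).prod)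
      (fun g => ((List.finRange k).map (fun i => factor i (Lsgn (s i) g))).prod) :=
    bd_prod (List.finRange k) M (fun i g => factor i (Lsgn (s i) g))
      (fun i _ => by rw [hM i]; exact bd_M (s i) i)
  have key : ∀ g : G, (((List.finRange k).map (fun i => factor i (Lsgn (s i) g))).prod)ᴴ
      = ((List.finRange k).map (fun i => factor i (Lsgn (s i) g⁻¹))).prod := by
    intro g
    rw [Matrix.conjTranspose_list_prod, List.map_map]
    have e : ((List.finRange k).map (conjTranspose ∘ fun i => factor i (Lsgn (s i) g)))
        = (List.finRange k).map (fun i => factor i (Lsgn (s i) g⁻¹)) := by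
      apply List.map_congr_left; intro i _
      simp [Function.comp, factor_conjT, Lsgn_conjT]
    rw [e, ← List.map_reverse]
    rw [factor_list_prod (fun i => Lsgn (s i) g⁻¹) _
        ((List.nodup_reverse).mpr (List.nodup_finRange k)),
        factor_list_prod (fun i => Lsgn (s i) g⁻¹) _ (List.nodup_finRange k)]
    ext x y
    simp only [Matrix.of_apply, List.map_reverse, List.prod_reverse, List.mem_reverse]
  constructor
  · exact pme_bd hbd ψ hψ
  · have hrev : (((List.finRange k).reverse).map (fun i => (M i)ᴴ)).prod
        = ((((List.finRange k).map M).prod))ᴴ := by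
      rw [Matrix.conjTranspose_list_prod, List.map_map, ← List.map_reverse]
      rfl
    rw [hrev, pme_bd (bd_conjT hbd) ψ hψ]
    congr 1
    calc (∑ h : G, (((List.finRange k).map (fun i => factor i (Lsgn (s i) h))).prod)ᴴ)
        = ∑ h : G, ((List.finRange k).map (fun i => factor i (Lsgn (s i) h⁻¹))).prod := by
          exact Finset.sum_congr rfl (fun h _ => key h)
      _ = ∑ h : G, ((List.finRange k).map (fun i => factor i (Lsgn (s i) h))).prod := by
          exact Fintype.sum_equiv (Equiv.inv G) _ _ (fun h => rfl)
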